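/- Let B₁ ≠ B₂ ∈ ℂ, let P₀, P₁, P₂ ∈ ℂ be non-collinear, and let P₃ ∈ ℂ with P₃ ≠ B₁. Then the set of direct isometries g of the plane satisfying |g(P k) − B₁| = |P k − B₁| for k = 0, 1, 2 and |g(P₃) − B₂| = |P₃ − B₂| has at most two elements. -/

import Mathlib

open Complex

/-- A point equidistant (pointwise) with another point from three non-collinear
points must coincide with it. -/
lemma eq_of_three_dists (P0 P1 P2 : ℂ) (hnc : ¬ Collinear ℝ ({P0, P1, P2} : Set ℂ))
    {x y : ℂ}
    (h0 : ‖x - P0‖ = ‖y - P0‖)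
    (h1 : ‖x - P1‖ = ‖y - P1‖)
    (h2 : ‖x - P2‖ = ‖y - P2‖) : x = y := by
  by_contra hxy
  apply hnc
  have e0 : Complex.normSq (x - P0) = Complex.normSq (y - P0) := by
    rw [← Complex.sq_norm, ← Complex.sq_norm, h0]
  have e1 : Complex.normSq (x - P1) = Complex.normSq (y - P1) := by
    rw [← Complex.sq_norm, ← Complex.sq_norm, h1]
  have e2 : Complex.normSq (x - P2) = Complex.normSq (y - P2) := by
    rw [← Complex.sq_norm, ← Complex.sq_norm, h2]
  simp only [Complex.normSq_apply, Complex.sub_re, Complex.sub_im] at e0 e1 e2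
  obtain ⟨dr, hdr⟩ : ∃ dr : ℝ, dr = y.re - x.re := ⟨_, rfl⟩
  obtain ⟨di, hdi⟩ : ∃ di : ℝ, di = y.im - x.im := ⟨_, rfl⟩
  have o1 : (P1.re - P0.re) * dr + (P1.im - P0.im) * di = 0 := by
    rw [hdr, hdi]; linear_combination (e1 - e0) / 2
  have o2 : (P2.re - P0.re) * dr + (P2.im - P0.im) * di = 0 := by
    rw [hdr, hdi]; linear_combination (e2 - e0) / 2
  have hden : dr ^ 2 + di ^ 2 ≠ 0 := by
    intro h
    obtain ⟨hq1, hq2⟩ := (add_eq_zero_iff_of_nonneg (sq_nonneg dr) (sq_nonneg di)).mp h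
    apply hxy
    apply Complex.ext
    · have := sq_eq_zero_iff.mp hq1; rw [hdr] at this; linarith
    · have := sq_eq_zero_iff.mp hq2; rw [hdi] at this; linarith
  rw [collinear_iff_exists_forall_eq_smul_vadd]
  refine ⟨P0, Complex.I * (y - x), ?_⟩
  have hvre : (Complex.I * (y - x)).re = -di := by
    simp [Complex.mul_re, hdi]
  have hvim : (Complex.I * (y - x)).im = dr := by
    simp [Complex.mul_im, hdr]
  have gen : ∀ u : ℂ, (u.re - P0.re) * dr + (u.im - P0.im) * di = 0 →
      ∃ r : ℝ, u = r • (Complex.I * (y - x)) +ᵥ P0 := by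
    intro u hu
    obtain ⟨r, hr⟩ : ∃ r : ℝ,
        r = ((u.im - P0.im) * dr - (u.re - P0.re) * di) / (dr ^ 2 + di ^ 2) := ⟨_, rfl⟩
    have c1 : r * di = -(u.re - P0.re) := by
      rw [hr, div_mul_eq_mul_div, div_eq_iff hden]
      linear_combination dr * hu
    have c2 : r * dr = u.im - P0.im := by
      rw [hr, div_mul_eq_mul_div, div_eq_iff hden]
      linear_combination -di * hu
    refine ⟨r, ?_⟩
    apply Complex.ext
    · simp only [vadd_eq_add, Complex.add_re, Complex.real_smul, Complex.mul_re,
        Complex.ofReal_re, Complex.ofReal_im, hvre, hvim]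
      linarith [c1]
    · simp only [vadd_eq_add, Complex.add_im, Complex.real_smul, Complex.mul_im,
        Complex.ofReal_re, Complex.ofReal_im, hvre, hvim]
      linarith [c2]
  intro p hp
  simp only [Set.mem_insert_iff, Set.mem_singleton_iff] at hp
  rcases hp with rfl | rfl | rfl
  · exact gen p (by ring)
  · exact gen p (by linear_combination o1)
  · exact gen p (by linear_combination o2)

/-- A (complex) quadratic with nonzero leading coefficient has at most two roots. -/
lemma quad_at_most_two {d e f : ℂ} (hd : d ≠ 0) {a1 a2 a : ℂ}
    (h1 : d * a1 ^ 2 - e * a1 + f = 0) (h2 : d * a2 ^ 2 - e * a2 + f = 0)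
    (h : d * a ^ 2 - e * a + f = 0) (hne : a1 ≠ a2) : a = a1 ∨ a = a2 := by
  by_contra hc
  push_neg at hc
  obtain ⟨hc1, hc2⟩ := hc
  have k1 : (a - a1) * (d * (a + a1) - e) = 0 := by linear_combination h - h1
  have k2 : (a - a2) * (d * (a + a2) - e) = 0 := by linear_combination h - h2
  have m1 : d * (a + a1) - e = 0 :=
    (mul_eq_zero.mp k1).resolve_left (sub_ne_zero.mpr hc1)
  have m2 : d * (a + a2) - e = 0 :=
    (mul_eq_zero.mp k2).resolve_left (sub_ne_zero.mpr hc2)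
  apply hne
  have : d * a1 = d * a2 := by linear_combination m1 - m2
  exact mul_left_cancel₀ hd this

/-- At most two elements in a set whose members are parametrized by roots of a
property with at most two "values". -/
lemma at_most_two_param (S : Set (ℂ → ℂ)) (F : ℂ → (ℂ → ℂ)) (Q : ℂ → Prop)
    (hpar : ∀ g ∈ S, ∃ a, Q a ∧ g = F a)
    (htwo : ∀ a1 a2 a3, Q a1 → Q a2 → Q a3 → a3 = a1 ∨ a3 = a2 ∨ a1 = a2) :
    ∃ g1 g2 : ℂ → ℂ, ∀ g ∈ S, g = g1 ∨ g = g2 := by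
  classical
  rcases em (∃ g, g ∈ S) with ⟨g1, hg1⟩ | hSe
  · rcases em (∃ g ∈ S, g ≠ g1) with ⟨g2, hg2, hne⟩ | h2
    · refine ⟨g1, g2, fun g hg => ?_⟩
      obtain ⟨a1, hQ1, hf1⟩ := hpar g1 hg1
      obtain ⟨a2, hQ2, hf2⟩ := hpar g2 hg2
      obtain ⟨a, hQ, hf⟩ := hpar g hg
      rcases htwo a1 a2 a hQ1 hQ2 hQ with h | h | h
      · exact Or.inl (by rw [hf, h, ← hf1])
      · exact Or.inr (by rw [hf, h, ← hf2])
      · exact absurd (by rw [hf2, ← h, ← hf1] : g2 = g1) hne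
    · push_neg at h2
      exact ⟨g1, g1, fun g hg => Or.inl (h2 g hg)⟩
  · exact ⟨id, id, fun g hg => absurd ⟨g, hg⟩ hSe⟩

/-- Generic 3+1 case: with three non-collinear points sensed by `B₁` and a fourth point
sensed by `B₂`, at most two direct isometries are compatible with all measurements. -/
theorem generic_three_plus_one_at_most_two (B1 B2 : ℂ) (hB : B1 ≠ B2)
    (P0 P1 P2 : ℂ) (hnc : ¬ Collinear ℝ ({P0, P1, P2} : Set ℂ))
    (P3 : ℂ) (hP3 : P3 ≠ B1) :
    ∃ g1 g2 : ℂ → ℂ,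
      ∀ g ∈ {g : ℂ → ℂ | (∃ a b : ℂ, ‖a‖ = 1 ∧ g = fun z => a * z + b) ∧
        ‖g P0 - B1‖ = ‖P0 - B1‖ ∧
        ‖g P1 - B1‖ = ‖P1 - B1‖ ∧
        ‖g P2 - B1‖ = ‖P2 - B1‖ ∧
        ‖g P3 - B2‖ = ‖P3 - B2‖},
      g = g1 ∨ g = g2 := by
  classical
  have hw0 : P3 - B1 ≠ 0 := sub_ne_zero.mpr hP3
  have hc0 : B1 - B2 ≠ 0 := sub_ne_zero.mpr hB
  apply at_most_two_param _ (fun a => fun z => a * (z - B1) + B1)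
    (fun a => (P3 - B1) * (starRingEnd ℂ) (B1 - B2) * a ^ 2 -
      (((‖P3 - B2‖ : ℝ) : ℂ) ^ 2 - (P3 - B1) * (starRingEnd ℂ) (P3 - B1)
        - (B1 - B2) * (starRingEnd ℂ) (B1 - B2)) * a +
      (starRingEnd ℂ) (P3 - B1) * (B1 - B2) = 0)
  · -- parametrization
    intro g hg
    obtain ⟨⟨a, b, habs, rfl⟩, h0, h1, h2, h3⟩ := hg
    beta_reduce at h0 h1 h2 h3
    have haa : a * (starRingEnd ℂ) a = 1 := by
      have hn : Complex.normSq a = 1 := by rw [Complex.normSq_eq_norm_sq, habs]; norm_num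
      rw [Complex.mul_conj, hn, Complex.ofReal_one]
    have dgen : ∀ P : ℂ, ‖a * P + b - B1‖ = ‖P - B1‖ →
        ‖(starRingEnd ℂ) a * (B1 - b) - P‖ = ‖B1 - P‖ := by
      intro P h
      have hid : a * ((starRingEnd ℂ) a * (B1 - b) - P) = B1 - (a * P + b) := by
        linear_combination (B1 - b) * haa
      calc ‖(starRingEnd ℂ) a * (B1 - b) - P‖
          = ‖a * ((starRingEnd ℂ) a * (B1 - b) - P)‖ := by
            rw [norm_mul, habs, one_mul]
        _ = ‖B1 - (a * P + b)‖ := by rw [hid]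
        _ = ‖a * P + b - B1‖ := norm_sub_rev _ _
        _ = ‖P - B1‖ := h
        _ = ‖B1 - P‖ := norm_sub_rev _ _
    have hfix : (starRingEnd ℂ) a * (B1 - b) = B1 :=
      eq_of_three_dists P0 P1 P2 hnc (dgen P0 h0) (dgen P1 h1) (dgen P2 h2)
    have hbv : b = (1 - a) * B1 := by
      linear_combination (B1 - b) * haa - a * hfix
    have h4 : ‖a * (P3 - B1) + (B1 - B2)‖ = ‖P3 - B2‖ := by
      rw [show a * (P3 - B1) + (B1 - B2) = a * P3 + b - B2 by rw [hbv]; ring]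
      exact h3
    have key : (a * (P3 - B1) + (B1 - B2)) * (starRingEnd ℂ) (a * (P3 - B1) + (B1 - B2))
        = ((‖P3 - B2‖ : ℝ) : ℂ) ^ 2 := by
      rw [Complex.mul_conj, Complex.normSq_eq_norm_sq, h4]
      push_cast
      ring
    simp only [map_add, map_mul] at key
    refine ⟨a, ?_, ?_⟩
    · show (P3 - B1) * (starRingEnd ℂ) (B1 - B2) * a ^ 2 -
        (((‖P3 - B2‖ : ℝ) : ℂ) ^ 2 - (P3 - B1) * (starRingEnd ℂ) (P3 - B1)
          - (B1 - B2) * (starRingEnd ℂ) (B1 - B2)) * a +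
        (starRingEnd ℂ) (P3 - B1) * (B1 - B2) = 0
      linear_combination a * key -
        (a * (P3 - B1) * (starRingEnd ℂ) (P3 - B1) + (B1 - B2) * (starRingEnd ℂ) (P3 - B1)) * haa
    · funext z
      show a * z + b = a * (z - B1) + B1
      rw [hbv]
      ring
  · -- at most two roots
    intro a1 a2 a3 hQ1 hQ2 hQ3
    have hd : (P3 - B1) * (starRingEnd ℂ) (B1 - B2) ≠ 0 := by
      refine mul_ne_zero hw0 ?_
      intro h
      apply hc0
      simpa using congrArg (starRingEnd ℂ) h
    by_cases h12 : a1 = a2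
    · exact Or.inr (Or.inr h12)
    · rcases quad_at_most_two hd hQ1 hQ2 hQ3 h12 with h | h
      · exact Or.inl h
      · exact Or.inr (Or.inl h)
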